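/- Let n > m > 1 be real. Define for A > 0: E_2^{nm}(A) = (nm/(n−m))·(1/2^5)·[ (2^{2+n}−1)(1+n)ζ(n+2)/(2A)^n − (2^{2+m}−1)(1+m)ζ(m+2)/(2A)^m ] and E_4^{nm}(A) = (nm/(3(n−m)))·(1/2^{11})·[ (2^{4+n}−1)(1+n)(2+n)(3+n)ζ(n+4)/(2A)^n − (2^{4+m}−1)(1+m)(2+m)(3+m)ζ(m+4)/(2A)^m ] − (1/6)·E_2^{nm}(A). Then there is no A > 0 with E_2^{nm}(A) = 0 and E_4^{nm}(A) = 0 simultaneously; consequently the 1D (n,m) Lennard-Jones model has no tricritical point and all its equidistant-to-bipartite phase transitions are of second order. -/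
import Mathlib


open Real Filter

/-- The Riemann zeta function `ζ(s) = Σ_{j=1}^∞ j^{-s}` for real `s > 1`. -/
noncomputable def rzeta (s : ℝ) : ℝ := ∑' j : ℕ, ((j : ℝ) + 1) ^ (-s)

/-- The coefficient `E₂^{nm}(A)` of `ε²` in the expansion of the bipartite energy of the
1D Lennard-Jones model around the equidistant configuration. -/
noncomputable def E2 (n m A : ℝ) : ℝ :=
  (n * m / (n - m)) * (1 / 2 ^ 5) *
    ((2 ^ (2 + n) - 1) * (1 + n) * rzeta (n + 2) / (2 * A) ^ n -
      (2 ^ (2 + m) - 1) * (1 + m) * rzeta (m + 2) / (2 * A) ^ m)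

/-- The coefficient `E₄^{nm}(A)` of `ε⁴` in the expansion of the bipartite energy of the
1D Lennard-Jones model around the equidistant configuration. -/
noncomputable def E4 (n m A : ℝ) : ℝ :=
  (n * m / (3 * (n - m))) * (1 / 2 ^ 11) *
    ((2 ^ (4 + n) - 1) * (1 + n) * (2 + n) * (3 + n) * rzeta (n + 4) / (2 * A) ^ n -
      (2 ^ (4 + m) - 1) * (1 + m) * (2 + m) * (3 + m) * rzeta (m + 4) / (2 * A) ^ m) -
    (1 / 6) * E2 n m A

/-! ### Auxiliary lemmas -/

/-- The "odd half-integer" series `F(s) = Σ_{k≥0} (2/(2k+1))^s = (2^s - 1) ζ(s)`. -/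
noncomputable def Fodd (s : ℝ) : ℝ := ∑' k : ℕ, (2 / (2 * (k : ℝ) + 1)) ^ s

lemma summable_rz {s : ℝ} (hs : 1 < s) :
    Summable (fun j : ℕ => ((j : ℝ) + 1) ^ (-s)) := by
  have h : Summable (fun n : ℕ => (n : ℝ) ^ (-s)) :=
    Real.summable_nat_rpow.2 (by linarith)
  have := (summable_nat_add_iff 1).2 h
  refine this.congr fun j => ?_
  push_cast
  ring_nf

lemma rz_pos {s : ℝ} (hs : 1 < s) : 0 < rzeta s := by
  refine Summable.tsum_pos (summable_rz hs) (fun j => Real.rpow_nonneg (by positivity) _) 0 ?_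
  exact Real.rpow_pos_of_pos (by norm_num) _

lemma summable_u {s : ℝ} (hs : 1 < s) :
    Summable (fun k : ℕ => (2 / (2 * (k : ℝ) + 1)) ^ s) := by
  refine Summable.of_nonneg_of_le (fun k => by positivity) (fun k => ?_)
    ((summable_rz hs).mul_left ((2 : ℝ) ^ s))
  have h1 : (0 : ℝ) < 2 * (k : ℝ) + 1 := by positivity
  have h2 : (0 : ℝ) < (k : ℝ) + 1 := by positivity
  rw [Real.div_rpow (by norm_num) h1.le, Real.rpow_neg h2.le, ← div_eq_mul_inv]
  exact div_le_div_of_nonneg_left (Real.rpow_nonneg (by norm_num) _)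
    (Real.rpow_pos_of_pos h2 _) (Real.rpow_le_rpow h2.le (by linarith) (by linarith))

lemma u_pos (s : ℝ) (k : ℕ) : 0 < (2 / (2 * (k : ℝ) + 1)) ^ s :=
  Real.rpow_pos_of_pos (by positivity) _

lemma Fodd_pos {s : ℝ} (hs : 1 < s) : 0 < Fodd s :=
  Summable.tsum_pos (summable_u hs) (fun k => (u_pos s k).le) 0 (u_pos s 0)

lemma Fodd_eq {s : ℝ} (hs : 1 < s) : Fodd s = (2 ^ s - 1) * rzeta s := by
  have hterm : ∀ j : ℕ, (2 / ((j : ℝ) + 1)) ^ s = 2 ^ s * ((j : ℝ) + 1) ^ (-s) := by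
    intro j
    have h2 : (0 : ℝ) < (j : ℝ) + 1 := by positivity
    rw [Real.div_rpow (by norm_num) h2.le, Real.rpow_neg h2.le, div_eq_mul_inv]
  have heven : ∀ k : ℕ, (2 / (((2 * k : ℕ) : ℝ) + 1)) ^ s
      = (2 / (2 * (k : ℝ) + 1)) ^ s := by
    intro k; push_cast; ring_nf
  have hodd : ∀ k : ℕ, (2 / (((2 * k + 1 : ℕ) : ℝ) + 1)) ^ s = ((k : ℝ) + 1) ^ (-s) := by
    intro k
    have h2 : (0 : ℝ) < (k : ℝ) + 1 := by positivity
    have hq : (2 : ℝ) / (((2 * k + 1 : ℕ) : ℝ) + 1) = ((k : ℝ) + 1)⁻¹ := by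
      push_cast
      rw [inv_eq_one_div, div_eq_div_iff (by positivity) (by positivity)]
      ring
    rw [hq, Real.inv_rpow h2.le, ← Real.rpow_neg h2.le]
  have he : Summable fun k : ℕ => (2 / (((2 * k : ℕ) : ℝ) + 1)) ^ s :=
    (summable_u hs).congr fun k => (heven k).symm
  have ho : Summable fun k : ℕ => (2 / (((2 * k + 1 : ℕ) : ℝ) + 1)) ^ s :=
    (summable_rz hs).congr fun k => (hodd k).symm
  have hsplit := tsum_even_add_odd (f := fun j : ℕ => (2 / ((j : ℝ) + 1)) ^ s) he ho
  have h1 : ∑' k : ℕ, (2 / (((2 * k : ℕ) : ℝ) + 1)) ^ s = Fodd s := tsum_congr heven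
  have h2 : ∑' k : ℕ, (2 / (((2 * k + 1 : ℕ) : ℝ) + 1)) ^ s = rzeta s := tsum_congr hodd
  have h3 : ∑' j : ℕ, (2 / ((j : ℝ) + 1)) ^ s = 2 ^ s * rzeta s := by
    rw [tsum_congr hterm, tsum_mul_left]; rfl
  rw [h1, h2, h3] at hsplit
  linarith [hsplit]

/-- Key log-convexity style inequality for `Fodd`. -/
lemma Fodd_key {p c : ℝ} (hp : 1 < p) (hc : 0 < c) :
    Fodd (p + c) * Fodd (p + 2) ≤ Fodd (p + c + 2) * Fodd p := by
  set u : ℝ → ℕ → ℝ := fun s k => (2 / (2 * (k : ℝ) + 1)) ^ s with hu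
  have hupos : ∀ s k, 0 < u s k := fun s k => u_pos s k
  have hs1 : Summable (u (p + c + 2)) := summable_u (by linarith)
  have hs2 : Summable (u p) := summable_u hp
  have hs3 : Summable (u (p + c)) := summable_u (by linarith)
  have hs4 : Summable (u (p + 2)) := summable_u (by linarith)
  have hS1 : Summable (fun kl : ℕ × ℕ => u (p + c + 2) kl.1 * u p kl.2) :=
    hs1.mul_of_nonneg hs2 (fun k => (hupos _ k).le) fun k => (hupos _ k).le
  have hS2 : Summable (fun kl : ℕ × ℕ => u (p + c) kl.1 * u (p + 2) kl.2) :=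
    hs3.mul_of_nonneg hs4 (fun k => (hupos _ k).le) fun k => (hupos _ k).le
  have e1 : Fodd (p + c + 2) * Fodd p = ∑' kl : ℕ × ℕ, u (p + c + 2) kl.1 * u p kl.2 :=
    Summable.tsum_mul_tsum hs1 hs2 hS1
  have e2 : Fodd (p + c) * Fodd (p + 2) = ∑' kl : ℕ × ℕ, u (p + c) kl.1 * u (p + 2) kl.2 :=
    Summable.tsum_mul_tsum hs3 hs4 hS2
  rw [e1, e2, ← sub_nonneg, ← Summable.tsum_sub hS1 hS2]
  set h : ℕ × ℕ → ℝ := fun kl =>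
    u (p + c + 2) kl.1 * u p kl.2 - u (p + c) kl.1 * u (p + 2) kl.2 with hh
  have hhs : Summable h := hS1.sub hS2
  have hhs' : Summable (fun kl : ℕ × ℕ => h (kl.2, kl.1)) :=
    (Equiv.prodComm ℕ ℕ).summable_iff.2 hhs
  have hswap : ∑' kl : ℕ × ℕ, h (kl.2, kl.1) = ∑' kl, h kl :=
    (Equiv.prodComm ℕ ℕ).tsum_eq h
  have hpt : ∀ kl : ℕ × ℕ, 0 ≤ h kl + h (kl.2, kl.1) := by
    rintro ⟨k, l⟩
    set x : ℝ := 2 / (2 * (k : ℝ) + 1) with hxdef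
    set y : ℝ := 2 / (2 * (l : ℝ) + 1) with hydef
    have hx : (0 : ℝ) < x := by rw [hxdef]; positivity
    have hy : (0 : ℝ) < y := by rw [hydef]; positivity
    have ea : ∀ z : ℝ, 0 < z → z ^ (p + c + 2) = z ^ p * z ^ c * z ^ (2 : ℝ) := by
      intro z hz; rw [Real.rpow_add hz, Real.rpow_add hz]
    have eb : ∀ z : ℝ, 0 < z → z ^ (p + c) = z ^ p * z ^ c := by
      intro z hz; rw [Real.rpow_add hz]
    have ec : ∀ z : ℝ, 0 < z → z ^ (p + 2) = z ^ p * z ^ (2 : ℝ) := by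
      intro z hz; rw [Real.rpow_add hz]
    have hfac : 0 ≤ (x ^ c - y ^ c) * (x ^ (2 : ℝ) - y ^ (2 : ℝ)) := by
      rcases le_total x y with hxy | hxy
      · have h1 := Real.rpow_le_rpow hx.le hxy hc.le
        have h2 := Real.rpow_le_rpow hx.le hxy (by norm_num : (0 : ℝ) ≤ 2)
        nlinarith
      · have h1 := Real.rpow_le_rpow hy.le hxy hc.le
        have h2 := Real.rpow_le_rpow hy.le hxy (by norm_num : (0 : ℝ) ≤ 2)
        nlinarith
    have hxp : 0 < x ^ p := Real.rpow_pos_of_pos hx p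
    have hyp : 0 < y ^ p := Real.rpow_pos_of_pos hy p
    have expand : h (k, l) + h ((k, l).2, (k, l).1)
        = x ^ p * y ^ p * ((x ^ c - y ^ c) * (x ^ (2 : ℝ) - y ^ (2 : ℝ))) := by
      simp only [hh, hu]
      rw [← hxdef, ← hydef]
      rw [ea x hx, ea y hy, eb x hx, eb y hy, ec x hx, ec y hy]
      ring
    rw [expand]
    exact mul_nonneg (mul_nonneg hxp.le hyp.le) hfac
  have hsum_nonneg : 0 ≤ ∑' kl : ℕ × ℕ, (h kl + h (kl.2, kl.1)) :=
    tsum_nonneg hpt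
  rw [Summable.tsum_add hhs hhs', hswap] at hsum_nonneg
  linarith

set_option maxHeartbeats 800000 in
/-- For `n > m > 1`, there is no `A > 0` with `E₂^{nm}(A) = 0` and
`E₄^{nm}(A) = 0` simultaneously; hence the 1D `(n,m)` Lennard-Jones model has no
tricritical point and all its equidistant-to-bipartite transitions are of second order. -/
theorem no_tricritical_point
    (n m : ℝ) (hm : 1 < m) (hnm : m < n) :
    ¬ ∃ A : ℝ, 0 < A ∧ E2 n m A = 0 ∧ E4 n m A = 0 := by
  rintro ⟨A, hA, h2, h4⟩
  have hn : 1 < n := hm.trans hnm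
  have hm0 : 0 < m := by linarith
  have hn0 : 0 < n := by linarith
  have hPpos : 0 < (2 * A) ^ n := Real.rpow_pos_of_pos (by linarith) n
  have hQpos : 0 < (2 * A) ^ m := Real.rpow_pos_of_pos (by linarith) m
  simp only [E4] at h4
  rw [h2, mul_zero, sub_zero] at h4
  simp only [E2] at h2
  have hc2 : (0 : ℝ) < n * m / (n - m) * (1 / 2 ^ 5) :=
    mul_pos (div_pos (mul_pos hn0 hm0) (by linarith)) (by norm_num)
  have hc4 : (0 : ℝ) < n * m / (3 * (n - m)) * (1 / 2 ^ 11) :=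
    mul_pos (div_pos (mul_pos hn0 hm0) (by linarith)) (by norm_num)
  have hS2 := (mul_eq_zero.1 h2).resolve_left hc2.ne'
  have hS4 := (mul_eq_zero.1 h4).resolve_left hc4.ne'
  -- turn the differences of quotients into cross-multiplied equalities
  have e2 : (2 ^ (2 + n) - 1) * (1 + n) * rzeta (n + 2) * (2 * A) ^ m
      = (2 ^ (2 + m) - 1) * (1 + m) * rzeta (m + 2) * (2 * A) ^ n := by
    have := sub_eq_zero.1 hS2
    rw [div_eq_div_iff hPpos.ne' hQpos.ne'] at this
    exact this
  have e4 : (2 ^ (4 + n) - 1) * (1 + n) * (2 + n) * (3 + n) * rzeta (n + 4) * (2 * A) ^ m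
      = (2 ^ (4 + m) - 1) * (1 + m) * (2 + m) * (3 + m) * rzeta (m + 4) * (2 * A) ^ n := by
    have := sub_eq_zero.1 hS4
    rw [div_eq_div_iff hPpos.ne' hQpos.ne'] at this
    exact this
  set P := (2 * A) ^ n
  set Q := (2 * A) ^ m
  have e5 : (2 ^ (2 + n) - 1) * (1 + n) * rzeta (n + 2) *
        ((2 ^ (4 + m) - 1) * (1 + m) * (2 + m) * (3 + m) * rzeta (m + 4)) * (P * Q)
      = (2 ^ (2 + m) - 1) * (1 + m) * rzeta (m + 2) *
        ((2 ^ (4 + n) - 1) * (1 + n) * (2 + n) * (3 + n) * rzeta (n + 4)) * (P * Q) := by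
    linear_combination ((2 ^ (4 + m) - 1) * (1 + m) * (2 + m) * (3 + m) * rzeta (m + 4) * P) * e2
      - ((2 ^ (2 + m) - 1) * (1 + m) * rzeta (m + 2) * P) * e4
  have e6 := mul_right_cancel₀ (mul_pos hPpos hQpos).ne' e5
  -- rewrite exponents and pass to `Fodd`
  rw [show (2 : ℝ) ^ (2 + n) = 2 ^ (n + 2) by rw [add_comm],
      show (2 : ℝ) ^ (2 + m) = 2 ^ (m + 2) by rw [add_comm],
      show (2 : ℝ) ^ (4 + n) = 2 ^ (n + 4) by rw [add_comm],
      show (2 : ℝ) ^ (4 + m) = 2 ^ (m + 4) by rw [add_comm]] at e6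
  have efin : (1 + n) * (1 + m) * (((2 + m) * (3 + m)) * (Fodd (n + 2) * Fodd (m + 4)))
      = (1 + n) * (1 + m) * (((2 + n) * (3 + n)) * (Fodd (m + 2) * Fodd (n + 4))) := by
    rw [Fodd_eq (by linarith : (1:ℝ) < n + 2), Fodd_eq (by linarith : (1:ℝ) < m + 4),
        Fodd_eq (by linarith : (1:ℝ) < m + 2), Fodd_eq (by linarith : (1:ℝ) < n + 4)]
    linear_combination e6
  have ecan := mul_left_cancel₀
    (show ((1 + n) * (1 + m) : ℝ) ≠ 0 by positivity) efin
  -- the key inequality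
  have hk := Fodd_key (p := m + 2) (c := n - m) (by linarith) (by linarith)
  rw [show (m + 2 + (n - m) + 2 : ℝ) = n + 4 by ring,
      show (m + 2 + (n - m) : ℝ) = n + 2 by ring,
      show (m + 2 + 2 : ℝ) = m + 4 by ring] at hk
  have hF1 : 0 < Fodd (n + 2) := Fodd_pos (by linarith)
  have hF2 : 0 < Fodd (m + 4) := Fodd_pos (by linarith)
  have hF3 : 0 < Fodd (m + 2) := Fodd_pos (by linarith)
  have hF4 : 0 < Fodd (n + 4) := Fodd_pos (by linarith)
  have hcm : (0 : ℝ) < (2 + m) * (3 + m) := by positivity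
  have hcn : ((2 + m) * (3 + m) : ℝ) < (2 + n) * (3 + n) := by nlinarith
  have apos : 0 < Fodd (n + 2) * Fodd (m + 4) := mul_pos hF1 hF2
  have hba : Fodd (n + 2) * Fodd (m + 4) ≤ Fodd (m + 2) * Fodd (n + 4) :=
    hk.trans_eq (mul_comm _ _)
  have hlt : (2 + m) * (3 + m) * (Fodd (n + 2) * Fodd (m + 4))
      < (2 + n) * (3 + n) * (Fodd (n + 2) * Fodd (m + 4)) :=
    mul_lt_mul_of_pos_right hcn apos
  have hle : (2 + n) * (3 + n) * (Fodd (n + 2) * Fodd (m + 4))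
      ≤ (2 + n) * (3 + n) * (Fodd (m + 2) * Fodd (n + 4)) :=
    mul_le_mul_of_nonneg_left hba (by positivity)
  linarith [ecan, hlt, hle]
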